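/- Fix d ≥ 1 and a symmetric positive-definite matrix M ∈ ℝ^{d×d} with eigenvalues λ1 ≥ λ2 ≥ … ≥ λd > 0 (listed with multiplicity). For w ∈ ℝ^d let g(w) = (w wᵀ − M)·w (the gradient of F(w) = (1/2)·‖w wᵀ − M‖_F²) and let H(w) = ‖w‖²·I + 2·w wᵀ − M (its Hessian). Suppose 0 < ε < min{1, (λ1 − λ2)²/16, (3/8)·(λ1 − λ2)^{5/2}}, ‖g(w)‖ ≤ ε, and uᵀ H(w) u ≥ −√ε for every unit vector u ∈ ℝ^d. Then |‖w‖² − λ1| < √ε. -/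

import Mathlib

open scoped Matrix

private lemma vecMulVec_mulVec' {d : ℕ} (a b x : Fin d → ℝ) :
    (Matrix.vecMulVec a b) *ᵥ x = (b ⬝ᵥ x) • a := by
  ext i
  simp [Matrix.mulVec, dotProduct, Matrix.vecMulVec_apply, Finset.sum_mul,
    Finset.mul_sum, mul_assoc, mul_comm, mul_left_comm]

private lemma dot_ortho {d : ℕ} (U : Matrix (Fin d) (Fin d) ℝ) (hUU : U * Uᵀ = 1)
    (v : Fin d → ℝ) : (Uᵀ *ᵥ v) ⬝ᵥ (Uᵀ *ᵥ v) = v ⬝ᵥ v := by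
  rw [Matrix.dotProduct_mulVec, Matrix.vecMul_transpose, Matrix.mulVec_mulVec, hUU,
    Matrix.one_mulVec]

set_option maxHeartbeats 1000000 in
/-- Matrix PCA is strict saddle: if `M` is symmetric positive definite with eigenvalues
`λ1 ≥ λ2 ≥ … ≥ λd > 0`, and `w` is an `ε`-second-order stationary point of
`F(w) = (1/2)‖w wᵀ − M‖_F²` (gradient `g(w) = (w wᵀ − M) w`, Hessian
`H(w) = ‖w‖² I + 2 w wᵀ − M`) for small enough `ε`, then `|‖w‖² − λ1| < √ε`. -/
theorem matrix_pca_strict_saddle (d : ℕ) (hd : 2 ≤ d)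
    (M : Matrix (Fin d) (Fin d) ℝ) (hMsymm : M.IsSymm) (hMpd : M.PosDef)
    (lam : Fin d → ℝ) (hlam_anti : Antitone lam) (hlam_pos : ∀ i, 0 < lam i)
    (hdiag : ∃ U : Matrix (Fin d) (Fin d) ℝ, Uᵀ * U = 1 ∧
      M = U * Matrix.diagonal lam * Uᵀ)
    (ε : ℝ) (hε0 : 0 < ε)
    (hε : ε < min 1 (min ((lam ⟨0, by omega⟩ - lam ⟨1, by omega⟩) ^ 2 / 16)
      (3 / 8 * (lam ⟨0, by omega⟩ - lam ⟨1, by omega⟩) ^ ((5 : ℝ) / 2))))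
    (w : Fin d → ℝ)
    (hg : Real.sqrt (∑ i, ((Matrix.vecMulVec w w - M).mulVec w i) ^ 2) ≤ ε)
    (hH : ∀ u : Fin d → ℝ, (∑ i, u i ^ 2) = 1 →
      -Real.sqrt ε ≤ dotProduct u
        (((∑ i, w i ^ 2) • (1 : Matrix (Fin d) (Fin d) ℝ)
          + (2 : ℝ) • Matrix.vecMulVec w w - M).mulVec u)) :
    |(∑ i, w i ^ 2) - lam ⟨0, by omega⟩| < Real.sqrt ε := by
  obtain ⟨U, hU, hM⟩ := hdiag
  have hUU : U * Uᵀ = 1 := mul_eq_one_comm.mp hU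
  have hd0 : 0 < d := by omega
  have hd1 : 1 < d := by omega
  set i0 : Fin d := ⟨0, hd0⟩ with hi0
  set i1 : Fin d := ⟨1, hd1⟩ with hi1
  set s : ℝ := ∑ i, w i ^ 2 with hs
  set r : ℝ := Real.sqrt ε with hrdef
  set y : Fin d → ℝ := Uᵀ *ᵥ w with hy
  set δ : ℝ := lam i0 - lam i1 with hδ
  have hεlt : ε < δ ^ 2 / 16 :=
    lt_of_lt_of_le hε (le_trans (min_le_right _ _) (min_le_left _ _))
  have hε1 : ε < 1 := lt_of_lt_of_le hε (min_le_left _ _)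
  have hδ0 : 0 ≤ δ := sub_nonneg.2 (hlam_anti (by simp [hi0, hi1, Fin.le_def]))
  have hδpos : 0 < δ := by
    rcases hδ0.eq_or_lt with h | h
    · exfalso; nlinarith
    · exact h
  have hr0 : 0 < r := Real.sqrt_pos.mpr hε0
  have hr2 : r ^ 2 = ε := Real.sq_sqrt hε0.le
  have hr1 : r < 1 := by nlinarith
  have hεr : ε ≤ r := by nlinarith
  have hrδ : 4 * r < δ := by nlinarith
  -- sum of squares of y equals s
  have hy_sum : ∑ i, y i ^ 2 = s := by
    have h := dot_ortho U hUU w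
    simpa [hy, dotProduct, pow_two, hs] using h
  -- gradient condition in eigencoordinates
  have hg2 : ∑ i, ((s - lam i) * y i) ^ 2 ≤ ε ^ 2 := by
    have hMw : Uᵀ * M = Matrix.diagonal lam * Uᵀ := by
      rw [hM, ← Matrix.mul_assoc, ← Matrix.mul_assoc, hU, Matrix.one_mul]
    have h1 : Uᵀ *ᵥ ((Matrix.vecMulVec w w - M) *ᵥ w) = fun i => (s - lam i) * y i := by
      have hww : w ⬝ᵥ w = s := by simp [dotProduct, pow_two, hs]
      rw [Matrix.sub_mulVec, vecMulVec_mulVec', Matrix.mulVec_sub, Matrix.mulVec_smul,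
        Matrix.mulVec_mulVec, hMw, ← Matrix.mulVec_mulVec]
      ext i
      simp only [Pi.sub_apply, Pi.smul_apply, smul_eq_mul, Matrix.mulVec_diagonal, hww, ← hy]
      ring
    have h2 : ∑ i, ((s - lam i) * y i) ^ 2
        = ∑ i, ((Matrix.vecMulVec w w - M) *ᵥ w) i ^ 2 := by
      have h := dot_ortho U hUU ((Matrix.vecMulVec w w - M) *ᵥ w)
      rw [h1] at h
      simpa [dotProduct, pow_two] using h
    rw [h2]
    have hnn : 0 ≤ ∑ i, ((Matrix.vecMulVec w w - M) *ᵥ w) i ^ 2 :=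
      Finset.sum_nonneg fun i _ => sq_nonneg _
    calc ∑ i, ((Matrix.vecMulVec w w - M) *ᵥ w) i ^ 2
        = Real.sqrt (∑ i, ((Matrix.vecMulVec w w - M) *ᵥ w) i ^ 2) ^ 2 :=
          (Real.sq_sqrt hnn).symm
      _ ≤ ε ^ 2 := by
          exact pow_le_pow_left₀ (Real.sqrt_nonneg _) hg 2
  -- Hessian condition in eigendirections
  have hH3 : ∀ i : Fin d, -r ≤ s + 2 * y i ^ 2 - lam i := by
    intro i
    set u : Fin d → ℝ := fun j => U j i with hu
    have hue : u = U *ᵥ Pi.single i 1 := by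
      ext j; simp [hu, Matrix.mulVec_single]
    have h1 : Uᵀ *ᵥ u = Pi.single i 1 := by
      rw [hue, Matrix.mulVec_mulVec, hU, Matrix.one_mulVec]
    have hunit : ∑ j, u j ^ 2 = 1 := by
      have h2 : (Uᵀ * U) i i = 1 := by rw [hU]; simp
      simpa [Matrix.mul_apply, Matrix.transpose_apply, pow_two, hu] using h2
    have hMu : M *ᵥ u = lam i • u := by
      rw [hM, ← Matrix.mulVec_mulVec, ← Matrix.mulVec_mulVec, h1,
        Matrix.diagonal_mulVec_single]
      ext j
      simp [hu, mul_comm]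
    have huu : u ⬝ᵥ u = 1 := by simpa [dotProduct, pow_two] using hunit
    have huw : u ⬝ᵥ w = y i := by
      simp [hu, hy, Matrix.mulVec, dotProduct, Matrix.transpose_apply]
    have hwu : w ⬝ᵥ u = y i := by
      simp [hu, hy, Matrix.mulVec, dotProduct, Matrix.transpose_apply, mul_comm]
    have hdot : u ⬝ᵥ ((s • (1 : Matrix (Fin d) (Fin d) ℝ)
        + (2 : ℝ) • Matrix.vecMulVec w w - M) *ᵥ u) = s + 2 * y i ^ 2 - lam i := by
      rw [Matrix.sub_mulVec, Matrix.add_mulVec, Matrix.smul_mulVec,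
        Matrix.one_mulVec, Matrix.smul_mulVec, vecMulVec_mulVec', hMu,
        dotProduct_sub, dotProduct_add, dotProduct_smul,
        dotProduct_smul, dotProduct_smul, dotProduct_smul,
        huu, huw, hwu]
      simp only [smul_eq_mul, pow_two]
      ring
    have h := hH u hunit
    rw [hdot] at h
    exact h
  -- replace the goal with its `set` form
  show |s - lam i0| < r
  rw [abs_sub_lt_iff]
  constructor
  · -- s - λ1 < r
    by_contra hcon
    push_neg at hcon
    have hterm : ∀ i : Fin d, ε * y i ^ 2 ≤ ((s - lam i) * y i) ^ 2 := by
      intro i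
      have hle : lam i ≤ lam i0 := hlam_anti (by simp [hi0, Fin.le_def])
      have h1 : r ≤ s - lam i := by linarith
      have hsq : ε ≤ (s - lam i) ^ 2 := by
        nlinarith [mul_self_le_mul_self hr0.le h1]
      nlinarith [mul_le_mul_of_nonneg_right hsq (sq_nonneg (y i))]
    have hes : ε * s ≤ ε ^ 2 := by
      calc ε * s = ∑ i, ε * y i ^ 2 := by rw [← hy_sum, Finset.mul_sum]
        _ ≤ ∑ i, ((s - lam i) * y i) ^ 2 := Finset.sum_le_sum fun i _ => hterm i
        _ ≤ ε ^ 2 := hg2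
    have hl1 : 4 * r < lam i0 := by
      have := hlam_pos i1; rw [hδ] at hrδ; linarith
    have h5 : 5 * ε < s := by linarith
    nlinarith [hes, mul_lt_mul_of_pos_left h5 hε0, mul_pos hε0 hε0]
  · -- λ1 - s < r
    by_contra hcon
    push_neg at hcon
    have ha0 : ((s - lam i0) * y i0) ^ 2 ≤ ε ^ 2 :=
      le_trans (Finset.single_le_sum (f := fun i => ((s - lam i) * y i) ^ 2)
        (fun i _ => sq_nonneg _) (Finset.mem_univ i0)) hg2
    set a : ℝ := y i0 ^ 2 with haa
    have ha_nn : 0 ≤ a := sq_nonneg _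
    have hsqc : ε ≤ (lam i0 - s) ^ 2 := by
      nlinarith [mul_self_le_mul_self hr0.le hcon]
    have ha : a ≤ ε := by
      nlinarith [mul_le_mul_of_nonneg_right hsqc ha_nn, ha0, hε0]
    have h2 : lam i0 ≤ s + 2 * a + r := by have := hH3 i0; linarith
    have herase : ∑ i ∈ Finset.univ.erase i0, y i ^ 2 = s - a := by
      have h := Finset.sum_erase_add Finset.univ (fun i => y i ^ 2) (Finset.mem_univ i0)
      rw [hy_sum] at h; linarith
    have hkey : ∀ i ∈ Finset.univ.erase i0,
        (δ / 4 * y i) ^ 2 ≤ ((s - lam i) * y i) ^ 2 := by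
      intro i hi
      have hne : i ≠ i0 := Finset.ne_of_mem_erase hi
      have hvne : (i : Fin d).val ≠ 0 := by
        intro hv; exact hne (Fin.ext (by simp [hi0, hv]))
      have hle : lam i ≤ lam i1 := hlam_anti (by simp [hi1, Fin.le_def]; omega)
      have hsl : δ / 4 ≤ s - lam i := by
        rw [hδ] at hrδ ⊢; linarith
      have h0 : (0 : ℝ) ≤ δ / 4 := by linarith
      have hsq : (δ / 4) ^ 2 ≤ (s - lam i) ^ 2 := by
        nlinarith [mul_self_le_mul_self h0 hsl]
      nlinarith [mul_le_mul_of_nonneg_right hsq (sq_nonneg (y i))]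
    have hsum2 : ∑ i ∈ Finset.univ.erase i0, ((s - lam i) * y i) ^ 2 ≤ ε ^ 2 := by
      have h := Finset.sum_erase_add Finset.univ
        (fun i => ((s - lam i) * y i) ^ 2) (Finset.mem_univ i0)
      have := sq_nonneg ((s - lam i0) * y i0)
      linarith [hg2, h.ge, h.le]
    have hsum3 : (δ / 4) ^ 2 * (s - a) ≤ ε ^ 2 := by
      calc (δ / 4) ^ 2 * (s - a) = ∑ i ∈ Finset.univ.erase i0, (δ / 4 * y i) ^ 2 := by
            simp_rw [mul_pow]; rw [← Finset.mul_sum, herase]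
        _ ≤ ∑ i ∈ Finset.univ.erase i0, ((s - lam i) * y i) ^ 2 :=
            Finset.sum_le_sum hkey
        _ ≤ ε ^ 2 := hsum2
    have hsa : s - a ≤ ε := by
      nlinarith [hsum3, hεlt, hε0, mul_pos hδpos hδpos]
    have hls : δ / 2 ≤ lam i0 - s := by
      have := hlam_pos i1; rw [hδ] at hrδ ⊢; linarith
    have hsq2 : (δ / 2) ^ 2 ≤ (lam i0 - s) ^ 2 := by
      nlinarith [mul_self_le_mul_self (by linarith : (0:ℝ) ≤ δ / 2) hls]
    have ha4 : a ≤ ε / 4 := by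
      nlinarith [mul_le_mul_of_nonneg_right hsq2 ha_nn, ha0,
        mul_lt_mul_of_pos_left hεlt hε0, mul_pos hδpos hδpos]
    rw [hδ] at hrδ
    nlinarith [h2, ha4, hsa, hεr, hrδ, hlam_pos i1, hr0]
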